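/- arXiv:2001.07517 — 10 statements merged into one kernel-verified Lean document; each statement's English description precedes it below -/
import Mathlib

section
/- For every integer m ≥ 1, real q with 0 ≤ q < 1, and reals α, β with |α| < π/2 and 0 ≤ β < 1, ∑_{n=2}^∞ (2n - cos α - β) C(n+m-2, m-1) q^{n-1} (1-q)^m = 2qm/(1-q) + (2 - cos α - β)(1 - (1-q)^m). -/
lemma pascal_TSP_key (n M : ℕ) :
    (n + 1) * (n + M + 1).choose M = (M + 1) * (n + (M + 1)).choose (M + 1) := by
  have h := Nat.choose_succ_right_eq (n + M + 1) M
  have h2 : n + M + 1 - M = n + 1 := by omega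
  rw [h2] at h
  have h3 : n + (M + 1) = n + M + 1 := by omega
  rw [h3, mul_comm (n + 1), mul_comm (M + 1)]
  exact h.symm

theorem pascal_TSP_sum (m : ℕ) (hm : 1 ≤ m) (q : ℝ) (hq0 : 0 ≤ q) (hq1 : q < 1)
    (α β : ℝ) (hα : |α| < Real.pi / 2) (hβ0 : 0 ≤ β) (hβ1 : β < 1) :
    ∑' n : ℕ, (2 * ((n : ℝ) + 2) - Real.cos α - β) *
        (((n + 2) + m - 2).choose (m - 1) : ℝ) * q ^ (n + 1) * (1 - q) ^ m
      = 2 * q * m / (1 - q) + (2 - Real.cos α - β) * (1 - (1 - q) ^ m) := by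
  obtain ⟨M, rfl⟩ : ∃ M, m = M + 1 := ⟨m - 1, by omega⟩
  set c : ℝ := Real.cos α + β with hc
  have hq' : ‖q‖ < 1 := by rw [Real.norm_eq_abs, abs_of_nonneg hq0]; exact hq1
  have h1q : (1 : ℝ) - q ≠ 0 := by intro h; nlinarith
  have h1 : HasSum (fun n : ℕ ↦ (((n + (M + 1)).choose (M + 1) : ℝ)) * q ^ n)
      (1 / (1 - q) ^ (M + 2)) := hasSum_choose_mul_geometric_of_norm_lt_one (M + 1) hq'
  have h0 : HasSum (fun n : ℕ ↦ (((n + M).choose M : ℝ)) * q ^ n)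
      (1 / (1 - q) ^ (M + 1)) := hasSum_choose_mul_geometric_of_norm_lt_one M hq'
  have hB0 : HasSum (fun n : ℕ ↦ (((n + 1 + M).choose M : ℝ)) * q ^ (n + 1))
      (1 / (1 - q) ^ (M + 1) - 1) := by
    have := (hasSum_nat_add_iff' (f := fun n : ℕ ↦ (((n + M).choose M : ℝ)) * q ^ n)
      (g := 1 / (1 - q) ^ (M + 1)) 1).2 h0
    simpa using this
  have hA : HasSum (fun n : ℕ ↦ (2 * (M + 1) * q * (1 - q) ^ (M + 1)) *
      ((((n + (M + 1)).choose (M + 1) : ℝ)) * q ^ n))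
      ((2 * (M + 1) * q * (1 - q) ^ (M + 1)) * (1 / (1 - q) ^ (M + 2))) := h1.mul_left _
  have hB : HasSum (fun n : ℕ ↦ ((2 - c) * (1 - q) ^ (M + 1)) *
      ((((n + 1 + M).choose M : ℝ)) * q ^ (n + 1)))
      (((2 - c) * (1 - q) ^ (M + 1)) * (1 / (1 - q) ^ (M + 1) - 1)) := hB0.mul_left _
  have hmain : HasSum (fun n : ℕ ↦ (2 * ((n : ℝ) + 2) - Real.cos α - β) *
        (((n + 2) + (M + 1) - 2).choose ((M + 1) - 1) : ℝ) * q ^ (n + 1) * (1 - q) ^ (M + 1))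
      (2 * q * (M + 1) / (1 - q) + (2 - Real.cos α - β) * (1 - (1 - q) ^ (M + 1))) := by
    have h := hA.add hB
    convert h using 1
    · funext n
      have hidx : (n + 2) + (M + 1) - 2 = n + M + 1 := by omega
      have hidx2 : (M + 1) - 1 = M := by omega
      rw [hidx, hidx2]
      have hkey : ((n : ℝ) + 1) * ((n + M + 1).choose M : ℝ)
          = ((M : ℝ) + 1) * ((n + (M + 1)).choose (M + 1) : ℝ) := by
        exact_mod_cast congrArg (Nat.cast (R := ℝ)) (pascal_TSP_key n M)
      have hidx3 : n + 1 + M = n + M + 1 := by omega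
      rw [hidx3]
      have : (2 * ((n : ℝ) + 2) - Real.cos α - β) = 2 * ((n : ℝ) + 1) + (2 - c) := by
        rw [hc]; ring
      rw [this, pow_succ q n]
      linear_combination (2 * q * q ^ n * (1 - q) ^ (M + 1)) * hkey
    · have hp : (1 - q) ^ (M + 2) = (1 - q) ^ (M + 1) * (1 - q) := by ring
      rw [hc]
      field_simp
      ring
  exact_mod_cast hmain.tsum_eq
end

section
/- Let |α| < π/2, 0 ≤ β < 1, m ≥ 1 an integer, and 0 ≤ q < 1. The function Φ_q^m(z) = z - ∑_{n=2}^∞ C(n+m-2, m-1) q^{n-1}(1-q)^m z^n satisfies the coefficient condition ∑_{n=2}^∞ (2n - cos α - β) C(n+m-2, m-1) q^{n-1}(1-q)^m ≤ cos α - β if and only if 2qm/(1-q) + (2 - cos α - β)(1 - (1-q)^m) ≤ cos α - β. -/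
theorem Phi_mem_TSP_iff (m : ℕ) (hm : 1 ≤ m) (q : ℝ) (hq0 : 0 ≤ q) (hq1 : q < 1)
    (α β : ℝ) (hα : |α| < Real.pi / 2) (hβ0 : 0 ≤ β) (hβ1 : β < 1) :
    (∑' n : ℕ, (2 * ((n : ℝ) + 2) - Real.cos α - β) *
        (((n + 2) + m - 2).choose (m - 1) : ℝ) * q ^ (n + 1) * (1 - q) ^ m
      ≤ Real.cos α - β)
    ↔ 2 * q * m / (1 - q) + (2 - Real.cos α - β) * (1 - (1 - q) ^ m) ≤ Real.cos α - β := by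
  obtain ⟨k, rfl⟩ : ∃ k, m = k + 1 := ⟨m - 1, (Nat.succ_pred_eq_of_pos hm).symm⟩
  set c : ℝ := Real.cos α + β with hc
  have hq : ‖q‖ < 1 := by rw [Real.norm_eq_abs, abs_of_nonneg hq0]; exact hq1
  have hq1' : (1 : ℝ) - q ≠ 0 := by linarith
  -- base series
  have h1 := hasSum_choose_mul_geometric_of_norm_lt_one (k + 1) hq
  have h2 := hasSum_choose_mul_geometric_of_norm_lt_one k hq
  -- shifted series
  have g1 : HasSum (fun n : ℕ ↦ ((n + 1 + (k + 1)).choose (k + 1) : ℝ) * q ^ (n + 1))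
      (1 / (1 - q) ^ (k + 2) - 1) := by
    have := (hasSum_nat_add_iff' (f := fun n : ℕ ↦ ((n + (k + 1)).choose (k + 1) : ℝ) * q ^ n)
      1).mpr h1
    simpa using this
  have g2 : HasSum (fun n : ℕ ↦ ((n + 1 + k).choose k : ℝ) * q ^ (n + 1))
      (1 / (1 - q) ^ (k + 1) - 1) := by
    have := (hasSum_nat_add_iff' (f := fun n : ℕ ↦ ((n + k).choose k : ℝ) * q ^ n)
      1).mpr h2
    simpa using this
  -- combined series
  have key : HasSum (fun n : ℕ ↦ (2 * ((n : ℝ) + 2) - Real.cos α - β) *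
      (((n + 2) + (k + 1) - 2).choose ((k + 1) - 1) : ℝ) * q ^ (n + 1) * (1 - q) ^ (k + 1))
      (2 * q * (k + 1) / (1 - q) + (2 - Real.cos α - β) * (1 - (1 - q) ^ (k + 1))) := by
    have h3 : HasSum (fun n : ℕ ↦
        ((2 * (k + 1 : ℝ)) * (((n + 1 + (k + 1)).choose (k + 1) : ℝ) * q ^ (n + 1))
          - (2 * k + c) * (((n + 1 + k).choose k : ℝ) * q ^ (n + 1))) * (1 - q) ^ (k + 1))
        (((2 * (k + 1 : ℝ)) * (1 / (1 - q) ^ (k + 2) - 1)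
          - (2 * k + c) * (1 / (1 - q) ^ (k + 1) - 1)) * (1 - q) ^ (k + 1)) :=
      (((g1.mul_left _).sub (g2.mul_left _)).mul_right _)
    have heq : ∀ n : ℕ, (2 * ((n : ℝ) + 2) - Real.cos α - β) *
        (((n + 2) + (k + 1) - 2).choose ((k + 1) - 1) : ℝ) * q ^ (n + 1) * (1 - q) ^ (k + 1) =
        ((2 * (k + 1 : ℝ)) * (((n + 1 + (k + 1)).choose (k + 1) : ℝ) * q ^ (n + 1))
          - (2 * k + c) * (((n + 1 + k).choose k : ℝ) * q ^ (n + 1))) * (1 - q) ^ (k + 1) := by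
      intro n
      have hch : ((n + k + 1 + 1) : ℝ) * ((n + k + 1).choose k : ℝ) =
          ((n + k + 2).choose (k + 1) : ℝ) * ((k : ℝ) + 1) := by
        have := Nat.add_one_mul_choose_eq (n + k + 1) k
        have := congrArg (Nat.cast : ℕ → ℝ) this
        push_cast at this ⊢
        linarith [this]
      have e1 : (n + 2) + (k + 1) - 2 = n + k + 1 := by omega
      have e2 : (k + 1) - 1 = k := by omega
      have e3 : n + 1 + (k + 1) = n + k + 2 := by omega
      have e4 : n + 1 + k = n + k + 1 := by omega
      rw [e1, e2, e3, e4]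
      have expand : (2 * ((n : ℝ) + 2) - Real.cos α - β) * ((n + k + 1).choose k : ℝ) =
          (2 * (k + 1 : ℝ)) * ((n + k + 2).choose (k + 1) : ℝ)
            - (2 * k + c) * ((n + k + 1).choose k : ℝ) := by
        rw [hc]
        nlinarith [hch]
      linear_combination (q ^ (n + 1) * (1 - q) ^ (k + 1)) * expand
    have hval : ((2 * (k + 1 : ℝ)) * (1 / (1 - q) ^ (k + 2) - 1)
          - (2 * k + c) * (1 / (1 - q) ^ (k + 1) - 1)) * (1 - q) ^ (k + 1)
        = 2 * q * (k + 1) / (1 - q) + (2 - Real.cos α - β) * (1 - (1 - q) ^ (k + 1)) := by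
      rw [hc]
      have hpow : ((1 : ℝ) - q) ^ (k + 2) = (1 - q) ^ (k + 1) * (1 - q) := by ring
      have hpne : ((1 : ℝ) - q) ^ (k + 1) ≠ 0 := pow_ne_zero _ hq1'
      field_simp [hpow]
      ring
    rw [← hval]
    exact h3.congr_fun heq
  rw [key.tsum_eq]
  push_cast
  rfl
end

section
/- Let |α| < π/2, 0 ≤ β < 1, m ≥ 1 an integer, and 0 ≤ q < 1. Then ∑_{n=2}^∞ n(2n - cos α - β) C(n+m-2, m-1) q^{n-1}(1-q)^m ≤ cos α - β if and only if 2q²m(m+1)/(1-q)² + (6 - cos α - β)·qm/(1-q) + (2 - cos α - β)(1 - (1-q)^m) ≤ cos α - β. -/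
theorem Phi_mem_UCT_iff (m : ℕ) (hm : 1 ≤ m) (q : ℝ) (hq0 : 0 ≤ q) (hq1 : q < 1)
    (α β : ℝ) (hα : |α| < Real.pi / 2) (hβ0 : 0 ≤ β) (hβ1 : β < 1) :
    (∑' n : ℕ, ((n : ℝ) + 2) * (2 * ((n : ℝ) + 2) - Real.cos α - β) *
        (((n + 2) + m - 2).choose (m - 1) : ℝ) * q ^ (n + 1) * (1 - q) ^ m
      ≤ Real.cos α - β)
    ↔ 2 * q ^ 2 * m * (m + 1) / (1 - q) ^ 2 + (6 - Real.cos α - β) * (q * m / (1 - q))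
        + (2 - Real.cos α - β) * (1 - (1 - q) ^ m) ≤ Real.cos α - β := by
  obtain ⟨k, rfl⟩ : ∃ k, m = k + 1 := ⟨m - 1, by omega⟩
  have hq : ‖q‖ < 1 := by rw [Real.norm_eq_abs, abs_of_nonneg hq0]; linarith
  have h1q : (0:ℝ) < 1 - q := by linarith
  have h1q' : (1:ℝ) - q ≠ 0 := ne_of_gt h1q
  set cA := Real.cos α with hcA
  set M : ℝ := (k:ℝ) + 1 with hM
  set a : ℝ := 2*M*(M+1) with ha
  set b : ℝ := M*(2 - cA - β - 4*M) with hb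
  set d : ℝ := 2*M*(M+1) - (6 - cA - β)*M + (2 - cA - β) with hd
  have H0 := hasSum_choose_mul_geometric_of_norm_lt_one (𝕜 := ℝ) k hq
  have H1 := hasSum_choose_mul_geometric_of_norm_lt_one (𝕜 := ℝ) (k+1) hq
  have H2 := hasSum_choose_mul_geometric_of_norm_lt_one (𝕜 := ℝ) (k+2) hq
  set gfun : ℕ → ℝ := fun j : ℕ => ((j:ℝ)+1)*(2*((j:ℝ)+1) - cA - β) * ((j+k).choose k : ℝ)
      * q^j * (1-q)^(k+1) with hgfun
  set Sg : ℝ := (a * (1/(1-q)^(k+2+1)) + b * (1/(1-q)^(k+1+1)) + d * (1/(1-q)^(k+1))) * (1-q)^(k+1)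
    with hSg
  have Hg : HasSum gfun Sg := by
    have T := (((H2.mul_left a).add (H1.mul_left b)).add (H0.mul_left d)).mul_right ((1-q)^(k+1))
    convert T using 1
    · rfl
    funext j
    have e1 := Nat.add_one_mul_choose_eq (j+k) k
    have e2 := Nat.add_one_mul_choose_eq (j+k+1) (k+1)
    have e1' : ((j:ℝ)+(k:ℝ)+1) * ((j+k).choose k : ℝ)
        = (((j+k+1).choose (k+1) : ℕ) : ℝ) * ((k:ℝ)+1) := by exact_mod_cast congrArg (Nat.cast (R := ℝ)) e1
    have e2' : ((j:ℝ)+(k:ℝ)+2) * (((j+k+1).choose (k+1) : ℕ) : ℝ)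
        = (((j+k+2).choose (k+2) : ℕ) : ℝ) * ((k:ℝ)+2) := by exact_mod_cast congrArg (Nat.cast (R := ℝ)) e2
    have hA : j + (k+1) = j + k + 1 := by omega
    have hB : j + (k+2) = j + k + 2 := by omega
    simp only [hgfun, hA, hB, ha, hb, hd, hM]
    set x : ℝ := ((j+k).choose k : ℝ)
    set y : ℝ := (((j+k+1).choose (k+1) : ℕ) : ℝ)
    set z : ℝ := (((j+k+2).choose (k+2) : ℕ) : ℝ)
    have key : ((j:ℝ)+1)*(2*((j:ℝ)+1) - cA - β) * x
        = 2*((k:ℝ)+1)*((k:ℝ)+2)*z + (((k:ℝ)+1)*(2 - cA - β - 4*((k:ℝ)+1)))*y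
          + (2*((k:ℝ)+1)*((k:ℝ)+2) - (6 - cA - β)*((k:ℝ)+1) + (2 - cA - β))*x := by
      linear_combination 2*((k:ℝ)+1)*e2' + (2*((j:ℝ)+(k:ℝ)+2) + (2 - cA - β - 4*((k:ℝ)+1)))*e1'
    calc ((j:ℝ)+1)*(2*((j:ℝ)+1) - cA - β) * x * q^j * (1-q)^(k+1)
        = (((j:ℝ)+1)*(2*((j:ℝ)+1) - cA - β) * x) * q^j * (1-q)^(k+1) := by ring
      _ = (2*((k:ℝ)+1)*(((k:ℝ)+1)+1)*(z*q^j) + ((k:ℝ)+1)*(2 - cA - β - 4*((k:ℝ)+1))*(y*q^j)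
            + (2*((k:ℝ)+1)*(((k:ℝ)+1)+1) - (6 - cA - β)*((k:ℝ)+1) + (2 - cA - β))*(x*q^j))
            * (1-q)^(k+1) := by rw [key]; ring
  have Hshift : HasSum (fun n : ℕ => gfun (n+1)) (Sg - gfun 0) := by
    rw [hasSum_nat_add_iff 1]
    convert Hg using 1
    · rfl
    simp
  have Hf : HasSum (fun n : ℕ => ((n : ℝ) + 2) * (2 * ((n : ℝ) + 2) - cA - β) *
      (((n + 2) + (k+1) - 2).choose ((k+1) - 1) : ℝ) * q ^ (n + 1) * (1 - q) ^ (k+1))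
      (Sg - gfun 0) := by
    convert Hshift using 2 with n
    have h1 : (n + 2) + (k+1) - 2 = (n+1) + k := by omega
    have h2 : (k+1) - 1 = k := by omega
    simp only [hgfun, h1, h2]
    push_cast
    ring
  rw [Hf.tsum_eq]
  have hval : Sg - gfun 0 = 2 * q ^ 2 * ((k:ℝ)+1) * (((k:ℝ)+1) + 1) / (1 - q) ^ 2
      + (6 - cA - β) * (q * ((k:ℝ)+1) / (1 - q)) + (2 - cA - β) * (1 - (1 - q) ^ (k+1)) := by
    simp only [hSg, hgfun, ha, hb, hd, hM]
    simp [Nat.choose_self]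
    field_simp
    ring
  rw [hval]
  push_cast
  ring_nf
end

section
/- Let m > 1 be an integer, 0 < q < 1, |α| < π/2 and 0 ≤ β < 1. Then ∑_{n=2}^∞ (1/n)(2n - cos α - β) C(n+m-2, m-1) q^{n-1}(1-q)^m = 2(1 - (1-q)^m) - ((cos α + β)/(q(m-1)))·((1-q) - (1-q)^m - q(m-1)(1-q)^m). -/
set_option maxHeartbeats 800000

theorem pascal_TSP_reciprocal_sum (m : ℕ) (hm : 1 < m) (q : ℝ) (hq0 : 0 < q) (hq1 : q < 1)
    (α β : ℝ) (hα : |α| < Real.pi / 2) (hβ0 : 0 ≤ β) (hβ1 : β < 1) :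
    ∑' n : ℕ, (1 / ((n : ℝ) + 2)) * (2 * ((n : ℝ) + 2) - Real.cos α - β) *
        (((n + 2) + m - 2).choose (m - 1) : ℝ) * q ^ (n + 1) * (1 - q) ^ m
      = 2 * (1 - (1 - q) ^ m)
        - ((Real.cos α + β) / (q * ((m : ℝ) - 1))) *
            ((1 - q) - (1 - q) ^ m - q * ((m : ℝ) - 1) * (1 - q) ^ m) := by
  obtain ⟨M, rfl⟩ : ∃ M, m = M + 2 := ⟨m - 2, by omega⟩
  have hq : ‖q‖ < 1 := by rw [Real.norm_eq_abs, abs_lt]; constructor <;> linarith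
  have h1q : (0:ℝ) < 1 - q := by linarith
  have h1q' : (1 - q) ^ (M+2) ≠ 0 := pow_ne_zero _ (ne_of_gt h1q)
  have h1q'' : (1 - q) ^ (M+1) ≠ 0 := pow_ne_zero _ (ne_of_gt h1q)
  have hqne : q ≠ 0 := ne_of_gt hq0
  have H1 : HasSum (fun n : ℕ => ((n + (M+1)).choose (M+1) : ℝ) * q ^ n)
      (1 / (1-q)^(M+2)) := hasSum_choose_mul_geometric_of_norm_lt_one (M+1) hq
  have H2 : HasSum (fun n : ℕ => ((n + M).choose M : ℝ) * q ^ n)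
      (1 / (1-q)^(M+1)) := hasSum_choose_mul_geometric_of_norm_lt_one M hq
  have HF : HasSum (fun n : ℕ => (((n+1) + (M+1)).choose (M+1) : ℝ) * q ^ (n+1))
      (1 / (1-q)^(M+2) - 1) := by
    have := (hasSum_nat_add_iff' (f := fun n : ℕ => ((n + (M+1)).choose (M+1) : ℝ) * q ^ n) 1).2 H1
    simpa using this
  have HG : HasSum (fun n : ℕ => (((n+2) + M).choose M : ℝ) * q ^ (n+2))
      (1 / (1-q)^(M+1) - (1 + ((M:ℝ)+1) * q)) := by
    have := (hasSum_nat_add_iff' (f := fun n : ℕ => ((n + M).choose M : ℝ) * q ^ n) 2).2 H2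
    have e : ∑ i ∈ Finset.range 2, ((i + M).choose M : ℝ) * q ^ i = 1 + ((M:ℝ)+1) * q := by
      rw [Finset.sum_range_succ, Finset.sum_range_one]
      rw [Nat.add_comm 1 M, Nat.choose_succ_self_right, Nat.zero_add, Nat.choose_self]
      push_cast
      ring

    rwa [e] at this
  have H := (HF.mul_left (2*(1-q)^(M+2))).sub
    (HG.mul_left ((Real.cos α + β)*(1-q)^(M+2)/(((M:ℝ)+1)*q)))
  have Hfinal : HasSum (fun n : ℕ => (1 / ((n : ℝ) + 2)) * (2 * ((n : ℝ) + 2) - Real.cos α - β) *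
        (((n + 2) + (M+2) - 2).choose ((M+2) - 1) : ℝ) * q ^ (n + 1) * (1 - q) ^ (M+2))
      (2*(1-q)^(M+2) * (1 / (1-q)^(M+2) - 1)
        - (Real.cos α + β)*(1-q)^(M+2)/(((M:ℝ)+1)*q) * (1 / (1-q)^(M+1) - (1 + ((M:ℝ)+1) * q))) := by
    refine H.congr_fun fun n => ?_
    have e1 : (n + 2) + (M+2) - 2 = n + M + 2 := by omega
    have e2 : (n+1) + (M+1) = n + M + 2 := by omega
    have e3 : (n+2) + M = n + M + 2 := by omega
    rw [e1, e2, e3]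
    rw [show M + 2 - 1 = M + 1 by omega]
    have key : ((n+M+2).choose (M+1) : ℝ) * ((M:ℝ)+1) = ((n+M+2).choose M : ℝ) * ((n:ℝ)+2) := by
      have := Nat.choose_succ_right_eq (n+M+2) M
      have e4 : n + M + 2 - M = n + 2 := by omega
      rw [e4] at this
      exact_mod_cast congrArg (Nat.cast : ℕ → ℝ) this
    have hn2 : ((n:ℝ) + 2) ≠ 0 := by positivity
    have hM1 : ((M:ℝ) + 1) ≠ 0 := by positivity
    have hpow : q ^ (n+2) = q * q ^ (n+1) := by ring
    rw [hpow]
    field_simp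
    linear_combination ((Real.cos α + β) * q * q^n * (1-q)^M * ((1-q)^3 - (1-q)^2) - (Real.cos α + β) * (1 - q^2 * q^n * (1-q)^M * (1-q)^2)) * key
  rw [Hfinal.tsum_eq]
  have hcast : ((M+2 : ℕ) : ℝ) = (M:ℝ) + 2 := by push_cast; ring
  rw [hcast]
  have hP : (1-q)^(M+2) = (1-q)^(M+1) * (1-q) := pow_succ _ _
  rw [hP]
  have hPne : (1-q)^(M+1) ≠ 0 := h1q''
  set P := (1-q)^(M+1) with hPdef
  have h2 : ((M:ℝ) + 2) - 1 = (M:ℝ) + 1 := by ring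
  rw [h2]
  field_simp
  ring
end

section
/- Let τ be a nonzero complex number, -1 ≤ B < A ≤ 1, m > 1 an integer, 0 < q < 1, |α| < π/2, 0 ≤ β < 1. Suppose f(z) = z + ∑_{n≥2} a_n z^n satisfies |a_n| ≤ (A-B)|τ|/n for all n ≥ 2. If (A-B)|τ|·[2(1-(1-q)^m) - ((cos α + β)/(q(m-1)))((1-q) - (1-q)^m - q(m-1)(1-q)^m)] ≤ cos α - β, then ∑_{n=2}^∞ (2n - cos α - β) C(n+m-2, m-1) q^{n-1}(1-q)^m |a_n| ≤ cos α - β. -/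
set_option maxHeartbeats 1000000



private lemma aux_term (K q co b C1 C2 : ℝ) (n k : ℕ)
    (hqne : q ≠ 0)
    (hC : C1 * ((k:ℝ)+1) = C2 * ((n:ℝ)+2))
    (hn2 : ((n:ℝ)+2) ≠ 0) (hk1 : ((k:ℝ)+1) ≠ 0) :
    (2 * ((n : ℝ) + 2) - co - b) * C1 * q ^ (n + 1) * (1 - q) ^ (k+2) * (K / ((n:ℝ)+2))
    = K * (1-q)^(k+2) * (2 * (C1 * q ^ (n+1)) - ((co+b) / ((k:ℝ)+1)) * ((C2 * q ^ (n+2)) / q)) := by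
  field_simp
  ring_nf
  linear_combination (-(K * (1-q)^(k+2) * q^(n+2) * (co+b))) * hC

private lemma aux_sum (K q c : ℝ) (k : ℕ) (hqne : q ≠ 0) (h1qne : 1 - q ≠ 0) :
    K * (1-q)^(k+2) * (2 * (1 / (1 - q) ^ (k + 2) - 1)
        - (c / ((k:ℝ)+1)) * ((1 / (1 - q) ^ (k + 1) - 1 - ((k:ℝ)+1) * q) / q))
      = K * (2 * (1 - (1 - q) ^ (k+2))
          - (c / (q * ((((k:ℕ)+2:ℕ):ℝ) - 1))) *
              ((1 - q) - (1 - q) ^ (k+2) - q * ((((k:ℕ)+2:ℕ):ℝ) - 1) * (1 - q) ^ (k+2))) := by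
  have h1 : ((k:ℝ)+1) ≠ 0 := by positivity
  rw [show ((1:ℝ)-q)^(k+2) = (1-q)^(k+1)*(1-q) from pow_succ _ _]
  have hPne : (1-q)^(k+1) ≠ 0 := pow_ne_zero _ h1qne
  push_cast
  rw [show ((k:ℝ)+2)-1 = (k:ℝ)+1 from by ring]
  have hqk : q*((k:ℝ)+1) ≠ 0 := mul_ne_zero hqne h1
  field_simp

theorem inclusion_RtauAB_TSP (τ : ℂ) (hτ : τ ≠ 0) (A B : ℝ) (hB : -1 ≤ B) (hBA : B < A) (hA : A ≤ 1)
    (m : ℕ) (hm : 1 < m) (q : ℝ) (hq0 : 0 < q) (hq1 : q < 1)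
    (α β : ℝ) (hα : |α| < Real.pi / 2) (hβ0 : 0 ≤ β) (hβ1 : β < 1)
    (a : ℕ → ℂ) (ha : ∀ n, 2 ≤ n → ‖a n‖ ≤ (A - B) * ‖τ‖ / n)
    (hcond : (A - B) * ‖τ‖ *
        (2 * (1 - (1 - q) ^ m)
          - ((Real.cos α + β) / (q * ((m : ℝ) - 1))) *
              ((1 - q) - (1 - q) ^ m - q * ((m : ℝ) - 1) * (1 - q) ^ m))
      ≤ Real.cos α - β) :
    ∑' n : ℕ, (2 * ((n : ℝ) + 2) - Real.cos α - β) *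
        (((n + 2) + m - 2).choose (m - 1) : ℝ) * q ^ (n + 1) * (1 - q) ^ m *
        ‖a (n + 2)‖
      ≤ Real.cos α - β := by
  obtain ⟨k, rfl⟩ : ∃ k, m = k + 2 := ⟨m - 2, by omega⟩
  set K : ℝ := (A - B) * ‖τ‖ with hK
  have hKpos : 0 < K := by
    exact mul_pos (by linarith) (norm_pos_iff.mpr hτ)
  set c : ℝ := Real.cos α + β with hc
  have hqne : q ≠ 0 := ne_of_gt hq0
  have h1q : (0:ℝ) < 1 - q := by linarith
  have h1qne : (1:ℝ) - q ≠ 0 := ne_of_gt h1q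
  have hnorm : ‖q‖ < 1 := by rw [Real.norm_eq_abs, abs_of_pos hq0]; exact hq1
  have hcos1 : Real.cos α ≤ 1 := Real.cos_le_one α
  -- base series
  have H1 : HasSum (fun n : ℕ => ((n + (k+1)).choose (k+1) : ℝ) * q ^ n)
      (1 / (1 - q) ^ (k + 2)) := hasSum_choose_mul_geometric_of_norm_lt_one (k+1) hnorm
  have H2 : HasSum (fun n : ℕ => ((n + k).choose k : ℝ) * q ^ n)
      (1 / (1 - q) ^ (k + 1)) := hasSum_choose_mul_geometric_of_norm_lt_one k hnorm
  -- shifted series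
  have G1 : HasSum (fun n : ℕ => (((n+1) + (k+1)).choose (k+1) : ℝ) * q ^ (n+1))
      (1 / (1 - q) ^ (k + 2) - 1) := by
    have := (hasSum_nat_add_iff' (f := fun n : ℕ => ((n + (k+1)).choose (k+1) : ℝ) * q ^ n) 1).2 H1
    simpa using this
  have G2 : HasSum (fun n : ℕ => (((n+2) + k).choose k : ℝ) * q ^ (n+2))
      (1 / (1 - q) ^ (k + 1) - 1 - (k+1) * q) := by
    have := (hasSum_nat_add_iff' (f := fun n : ℕ => ((n + k).choose k : ℝ) * q ^ n) 2).2 H2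
    have hs : ∑ i ∈ Finset.range 2, ((i + k).choose k : ℝ) * q ^ i = 1 + (k+1) * q := by
      rw [Finset.sum_range_succ, Finset.sum_range_one]
      have hck : (1 + k).choose k = k + 1 := by
        rw [Nat.add_comm, Nat.choose_succ_self_right]
      simp [hck]
    rw [hs] at this
    convert this using 1
    rfl
    ring
  -- combined dominating series
  set c' : ℝ := c / ((k:ℝ) + 1) with hc'
  have Hu : HasSum (fun n : ℕ => K * (1-q)^(k+2) *
      (2 * ((((n+1) + (k+1)).choose (k+1) : ℝ) * q ^ (n+1))
        - c' * (((((n+2) + k).choose k : ℝ) * q ^ (n+2)) / q)))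
      (K * (1-q)^(k+2) * (2 * (1 / (1 - q) ^ (k + 2) - 1)
        - c' * ((1 / (1 - q) ^ (k + 1) - 1 - (k+1) * q) / q))) :=
    (((G1.mul_left 2).sub ((G2.div_const q).mul_left c')).mul_left _)
  set u : ℕ → ℝ := fun n => K * (1-q)^(k+2) *
      (2 * ((((n+1) + (k+1)).choose (k+1) : ℝ) * q ^ (n+1))
        - c' * (((((n+2) + k).choose k : ℝ) * q ^ (n+2)) / q)) with hu
  set t : ℕ → ℝ := fun n => (2 * ((n : ℝ) + 2) - Real.cos α - β) *
        (((n + 2) + (k+2) - 2).choose ((k+2) - 1) : ℝ) * q ^ (n + 1) * (1 - q) ^ (k+2) *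
        ‖a (n + 2)‖ with ht
  have hchoose : ∀ n : ℕ, ((n+2) + (k+2) - 2).choose ((k+2) - 1) = (n + k + 2).choose (k+1) := by
    intro n; congr 1 <;> omega
  have htnonneg : ∀ n, 0 ≤ t n := by
    intro n
    apply mul_nonneg; apply mul_nonneg; apply mul_nonneg; apply mul_nonneg
    · have : (n:ℝ) ≥ 0 := Nat.cast_nonneg n
      nlinarith
    · positivity
    · positivity
    · positivity
    · positivity
  have htu : ∀ n, t n ≤ u n := by
    intro n
    have hnat : (n + k + 2).choose (k+1) * (k+1) = (n + k + 2).choose k * (n + 2) := by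
      have := Nat.choose_succ_right_eq (n + k + 2) k
      rwa [show n + k + 2 - k = n + 2 from by omega] at this
    have hC : ((n + k + 2).choose (k+1) : ℝ) * ((k:ℝ)+1)
        = ((n + k + 2).choose k : ℝ) * ((n:ℝ)+2) := by exact_mod_cast hnat
    have ha' := ha (n+2) (by omega)
    have hfac : (0:ℝ) ≤ (2 * ((n : ℝ) + 2) - Real.cos α - β) *
        ((n + k + 2).choose (k+1) : ℝ) * q ^ (n + 1) * (1 - q) ^ (k+2) := by
      apply mul_nonneg; apply mul_nonneg; apply mul_nonneg
      · have : (n:ℝ) ≥ 0 := Nat.cast_nonneg n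
        nlinarith
      · positivity
      · positivity
      · positivity
    calc t n = (2 * ((n : ℝ) + 2) - Real.cos α - β) *
        ((n + k + 2).choose (k+1) : ℝ) * q ^ (n + 1) * (1 - q) ^ (k+2) *
        ‖a (n + 2)‖ := by rw [ht]; simp only [hchoose]
      _ ≤ (2 * ((n : ℝ) + 2) - Real.cos α - β) *
        ((n + k + 2).choose (k+1) : ℝ) * q ^ (n + 1) * (1 - q) ^ (k+2) *
        (K / ((n:ℝ)+2)) := by
          apply mul_le_mul_of_nonneg_left _ hfac
          convert ha' using 2
          rfl
          push_cast; ring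
      _ = u n := by
          rw [hu]
          simp only
          have hn2 : ((n:ℝ)+2) ≠ 0 := by positivity
          have hk1 : ((k:ℝ)+1) ≠ 0 := by positivity
          have he1 : (((n+1) + (k+1)).choose (k+1) : ℝ) = ((n + k + 2).choose (k+1) : ℝ) := by
            norm_cast; congr 1; omega
          have he2 : ((((n+2) + k).choose k : ℝ)) = ((n + k + 2).choose k : ℝ) := by
            norm_cast; congr 1; omega
          rw [he1, he2, hc', hc]
          exact aux_term K q (Real.cos α) β _ _ n k hqne hC hn2 hk1
  have hsum_t : Summable t := Summable.of_nonneg_of_le htnonneg htu Hu.summable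
  have hS : K * (1-q)^(k+2) * (2 * (1 / (1 - q) ^ (k + 2) - 1)
        - c' * ((1 / (1 - q) ^ (k + 1) - 1 - (k+1) * q) / q))
      = K * (2 * (1 - (1 - q) ^ (k+2))
          - (c / (q * (((k:ℝ)+2) - 1))) *
              ((1 - q) - (1 - q) ^ (k+2) - q * (((k:ℝ)+2) - 1) * (1 - q) ^ (k+2))) := by
    rw [hc']
    have h := aux_sum K q c k hqne h1qne
    push_cast at h
    exact h
  calc ∑' n : ℕ, t n ≤ ∑' n : ℕ, u n := Summable.tsum_le_tsum htu hsum_t Hu.summable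
    _ = K * (1-q)^(k+2) * (2 * (1 / (1 - q) ^ (k + 2) - 1)
        - c' * ((1 / (1 - q) ^ (k + 1) - 1 - (k+1) * q) / q)) := Hu.tsum_eq
    _ ≤ Real.cos α - β := by
        rw [hS]
        convert hcond using 3 <;> push_cast <;> ring
end

section
/- Let τ ≠ 0, -1 ≤ B < A ≤ 1, m ≥ 1 an integer, 0 ≤ q < 1, |α| < π/2, 0 ≤ β < 1. Suppose |a_n| ≤ (A-B)|τ|/n for all n ≥ 2. If (A-B)|τ|·(2qm/(1-q) + (2 - cos α - β)(1 - (1-q)^m)) ≤ cos α - β, then ∑_{n=2}^∞ n(2n - cos α - β) C(n+m-2, m-1) q^{n-1}(1-q)^m |a_n| ≤ cos α - β. -/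
theorem inclusion_RtauAB_UCT (τ : ℂ) (hτ : τ ≠ 0) (A B : ℝ) (hB : -1 ≤ B) (hBA : B < A) (hA : A ≤ 1)
    (m : ℕ) (hm : 1 ≤ m) (q : ℝ) (hq0 : 0 ≤ q) (hq1 : q < 1)
    (α β : ℝ) (hα : |α| < Real.pi / 2) (hβ0 : 0 ≤ β) (hβ1 : β < 1)
    (a : ℕ → ℂ) (ha : ∀ n, 2 ≤ n → ‖a n‖ ≤ (A - B) * ‖τ‖ / n)
    (hcond : (A - B) * ‖τ‖ *
        (2 * q * m / (1 - q) + (2 - Real.cos α - β) * (1 - (1 - q) ^ m))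
      ≤ Real.cos α - β) :
    ∑' n : ℕ, ((n : ℝ) + 2) * (2 * ((n : ℝ) + 2) - Real.cos α - β) *
        (((n + 2) + m - 2).choose (m - 1) : ℝ) * q ^ (n + 1) * (1 - q) ^ m *
        ‖a (n + 2)‖
      ≤ Real.cos α - β := by
  set K : ℝ := (A - B) * ‖τ‖ with hK
  have hK0 : 0 ≤ K := mul_nonneg (by linarith) (norm_nonneg τ)
  have h1q : 0 < 1 - q := by linarith
  have h1q' : (1 - q) ≠ 0 := ne_of_gt h1q
  have hqnorm : ‖q‖ < 1 := by rwa [Real.norm_eq_abs, abs_of_nonneg hq0]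
  have hcos1 : Real.cos α ≤ 1 := Real.cos_le_one α
  -- the dominating summand
  set u : ℕ → ℝ := fun n => K * (2 * m * (((n + m).choose m : ℝ) * q ^ (n + 1) * (1 - q) ^ m)
    + (2 - Real.cos α - β) * (((n + m).choose (m - 1) : ℝ) * q ^ (n + 1) * (1 - q) ^ m)) with hu
  -- the actual summand
  set t : ℕ → ℝ := fun n => ((n : ℝ) + 2) * (2 * ((n : ℝ) + 2) - Real.cos α - β) *
        (((n + 2) + m - 2).choose (m - 1) : ℝ) * q ^ (n + 1) * (1 - q) ^ m *
        ‖a (n + 2)‖ with ht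
  -- first series identity
  have U1 : HasSum (fun n : ℕ => ((n + m).choose m : ℝ) * q ^ (n + 1) * (1 - q) ^ m)
      (q / (1 - q)) := by
    have h := (hasSum_choose_mul_geometric_of_norm_lt_one m hqnorm).mul_left (q * (1 - q) ^ m)
    convert h using 1
    · rfl
    · funext n; ring
    · field_simp
      ring
  -- second series identity
  have U2 : HasSum (fun n : ℕ => ((n + m).choose (m - 1) : ℝ) * q ^ (n + 1) * (1 - q) ^ m)
      (1 - (1 - q) ^ m) := by
    have hbase := hasSum_choose_mul_geometric_of_norm_lt_one (m - 1) hqnorm (r := q)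
    rw [Nat.sub_add_cancel hm] at hbase
    have hshift : HasSum (fun n : ℕ => ((n + 1 + (m - 1)).choose (m - 1) : ℝ) * q ^ (n + 1))
        (1 / (1 - q) ^ m - 1) := by
      refine (hasSum_nat_add_iff (f := fun n : ℕ => ((n + (m - 1)).choose (m - 1) : ℝ) * q ^ n)
        1).mpr ?_
      simpa using hbase
    have h := hshift.mul_left ((1 - q) ^ m)
    convert h using 1
    · rfl
    · funext n
      have : n + 1 + (m - 1) = n + m := by omega
      rw [this]; ring
    · field_simp
  -- combined HasSum for u
  have hsum_u : HasSum u (K * (2 * q * m / (1 - q)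
      + (2 - Real.cos α - β) * (1 - (1 - q) ^ m))) := by
    have h1 := U1.mul_left (2 * (m : ℝ))
    have h2 := U2.mul_left (2 - Real.cos α - β)
    have h := (h1.add h2).mul_left K
    convert h using 1
    · rfl
    ring
  -- key combinatorial identity
  have key : ∀ n : ℕ, (m : ℝ) * ((n + m).choose m : ℝ) = ((n : ℝ) + 1) * ((n + m).choose (m - 1) : ℝ) := by
    intro n
    have h := Nat.choose_succ_right_eq (n + m) (m - 1)
    have h1 : m - 1 + 1 = m := by omega
    have h2 : n + m - (m - 1) = n + 1 := by omega
    rw [h1, h2] at h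
    have := congrArg (Nat.cast : ℕ → ℝ) h
    push_cast at this
    linarith
  -- pointwise bound
  have hpt : ∀ n : ℕ, t n ≤ u n := by
    intro n
    have hn0 : (0 : ℝ) ≤ (n : ℝ) := Nat.cast_nonneg n
    have hcn : (0 : ℝ) ≤ 2 * ((n : ℝ) + 2) - Real.cos α - β := by linarith
    have hCcast : (((n + 2) + m - 2).choose (m - 1) : ℝ) = ((n + m).choose (m - 1) : ℝ) := by
      congr 2
      omega
    have ha' := ha (n + 2) (by omega)
    push_cast at ha'
    have hne : ((n : ℝ) + 2) ≠ 0 := by positivity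
    have hpre : (0 : ℝ) ≤ ((n : ℝ) + 2) * (2 * ((n : ℝ) + 2) - Real.cos α - β) *
        (((n + 2) + m - 2).choose (m - 1) : ℝ) * q ^ (n + 1) * (1 - q) ^ m := by
      have : (0 : ℝ) ≤ ((n : ℝ) + 2) * (2 * ((n : ℝ) + 2) - Real.cos α - β) := by positivity
      positivity
    calc t n ≤ ((n : ℝ) + 2) * (2 * ((n : ℝ) + 2) - Real.cos α - β) *
          (((n + 2) + m - 2).choose (m - 1) : ℝ) * q ^ (n + 1) * (1 - q) ^ m *
          (K / ((n : ℝ) + 2)) := by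
            exact mul_le_mul_of_nonneg_left ha' hpre
      _ = K * ((2 * ((n : ℝ) + 2) - Real.cos α - β) * (((n + m).choose (m - 1)) : ℝ) *
            q ^ (n + 1) * (1 - q) ^ m) := by
            rw [hCcast]; field_simp
      _ = u n := by
            simp only [hu]
            linear_combination (-2 * K * q ^ (n + 1) * (1 - q) ^ m) * key n
  have ht0 : ∀ n : ℕ, 0 ≤ t n := by
    intro n
    have hn0 : (0 : ℝ) ≤ (n : ℝ) := Nat.cast_nonneg n
    have hcn : (0 : ℝ) ≤ 2 * ((n : ℝ) + 2) - Real.cos α - β := by linarith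
    have h1 : (0 : ℝ) ≤ ((n : ℝ) + 2) * (2 * ((n : ℝ) + 2) - Real.cos α - β) := by positivity
    have h2 : (0 : ℝ) ≤ ‖a (n + 2)‖ := norm_nonneg _
    rw [ht]
    positivity
  have hsummable_t : Summable t := Summable.of_nonneg_of_le ht0 hpt hsum_u.summable
  calc ∑' n : ℕ, t n ≤ ∑' n : ℕ, u n := Summable.tsum_le_tsum hpt hsummable_t hsum_u.summable
    _ = K * (2 * q * m / (1 - q) + (2 - Real.cos α - β) * (1 - (1 - q) ^ m)) := hsum_u.tsum_eq
    _ ≤ Real.cos α - β := hcond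
end

section
/- Let m ≥ 1 be an integer, 0 ≤ q < 1, |α| < π/2, 0 ≤ β < 1. Define G_q^m(z) = z - ∑_{n=2}^∞ C(n+m-2, m-1) q^{n-1}(1-q)^m z^n/n. Then ∑_{n=2}^∞ n(2n - cos α - β)·(coefficient of z^n in z - G_q^m) ≤ cos α - β if and only if 2qm/(1-q) + (2 - cos α - β)(1 - (1-q)^m) ≤ cos α - β. -/
theorem G_mem_UCT_iff (m : ℕ) (hm : 1 ≤ m) (q : ℝ) (hq0 : 0 ≤ q) (hq1 : q < 1)
    (α β : ℝ) (hα : |α| < Real.pi / 2) (hβ0 : 0 ≤ β) (hβ1 : β < 1) :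
    (∑' n : ℕ, ((n : ℝ) + 2) * (2 * ((n : ℝ) + 2) - Real.cos α - β) *
        ((((n + 2) + m - 2).choose (m - 1) : ℝ) * q ^ (n + 1) * (1 - q) ^ m / ((n : ℝ) + 2))
      ≤ Real.cos α - β)
    ↔ 2 * q * m / (1 - q) + (2 - Real.cos α - β) * (1 - (1 - q) ^ m) ≤ Real.cos α - β := by
  obtain ⟨k, rfl⟩ : ∃ k, m = k + 1 := ⟨m - 1, by omega⟩
  have hq' : ‖q‖ < 1 := by rw [Real.norm_eq_abs, abs_lt]; constructor <;> linarith
  have hone : (0:ℝ) < 1 - q := by linarith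
  have hone' : (1:ℝ) - q ≠ 0 := ne_of_gt hone
  have S1 : HasSum (fun n : ℕ => ((n + k).choose k : ℝ) * q ^ n) (1 / (1 - q) ^ (k + 1)) :=
    hasSum_choose_mul_geometric_of_norm_lt_one k hq'
  have S2 : HasSum (fun n : ℕ => ((n + (k+1)).choose (k+1) : ℝ) * q ^ n)
      (1 / (1 - q) ^ (k + 2)) :=
    hasSum_choose_mul_geometric_of_norm_lt_one (k+1) hq'
  have h2 : HasSum (fun n : ℕ => (((n+1) + k).choose k : ℝ) * q ^ (n+1))
      (1 / (1 - q) ^ (k + 1) - 1) := by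
    rw [hasSum_nat_add_iff (f := fun n : ℕ => ((n + k).choose k : ℝ) * q ^ n) 1]
    simpa using S1
  have key : HasSum (fun n : ℕ =>
      ((n : ℝ) + 2) * (2 * ((n : ℝ) + 2) - Real.cos α - β) *
        ((((n + 2) + (k+1) - 2).choose ((k+1) - 1) : ℝ) * q ^ (n + 1) * (1 - q) ^ (k+1)
          / ((n : ℝ) + 2)))
      ((2*((k:ℝ)+1)*(1-q)^(k+1)) * (1 / (1 - q) ^ (k + 2) * q)
        + ((2 - Real.cos α - β)*(1-q)^(k+1)) * (1 / (1 - q) ^ (k + 1) - 1)) := by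
    have H := ((S2.mul_right q).mul_left (2*((k:ℝ)+1)*(1-q)^(k+1))).add
      (h2.mul_left ((2 - Real.cos α - β)*(1-q)^(k+1)))
    convert H using 1
    · rfl
    funext n
    have hidx : (n + 2) + (k+1) - 2 = n + 1 + k := by omega
    have hidx2 : n + (k+1) = n + 1 + k := by omega
    have hidx3 : (k+1) - 1 = k := by omega
    rw [hidx, hidx2, hidx3]
    have hch : ((n+1+k).choose (k+1) : ℝ) * ((k:ℝ)+1) = ((n+1+k).choose k : ℝ) * ((n:ℝ)+1) := by
      have := Nat.choose_succ_right_eq (n+1+k) k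
      have h4 : n + 1 + k - k = n + 1 := by omega
      rw [h4] at this
      exact_mod_cast this
    have hn2 : ((n:ℝ) + 2) ≠ 0 := by positivity
    have hk1 : ((k:ℝ)+1) ≠ 0 := by positivity
    have hck : ((n+1+k).choose (k+1) : ℝ) = ((n+1+k).choose k : ℝ) * ((n:ℝ)+1) / ((k:ℝ)+1) := by
      rw [eq_div_iff hk1]; exact hch
    rw [hck]
    field_simp
    ring
  rw [key.tsum_eq]
  have hval : (2*((k:ℝ)+1)*(1-q)^(k+1)) * (1 / (1 - q) ^ (k + 2) * q)
        + ((2 - Real.cos α - β)*(1-q)^(k+1)) * (1 / (1 - q) ^ (k + 1) - 1)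
      = 2 * q * ((k:ℝ)+1) / (1 - q) + (2 - Real.cos α - β) * (1 - (1 - q) ^ (k+1)) := by
    have h1 : (1 - q) ^ (k + 2) = (1 - q)^(k+1) * (1 - q) := by ring
    have h1' : (1 - q) ^ (k + 1) ≠ 0 := pow_ne_zero _ hone'
    field_simp
    ring
  rw [hval]
  push_cast
  exact Iff.rfl
end

section
/- Let m > 1 be an integer, 0 < q < 1, |α| < π/2, 0 ≤ β < 1. Then ∑_{n=2}^∞ (2n - cos α - β) C(n+m-2, m-1) q^{n-1}(1-q)^m / n ≤ cos α - β if and only if 2(1 - (1-q)^m) - ((cos α + β)/(q(m-1)))·((1-q) - (1-q)^m - q(m-1)(1-q)^m) ≤ cos α - β. -/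
theorem G_mem_TSP_iff (m : ℕ) (hm : 1 < m) (q : ℝ) (hq0 : 0 < q) (hq1 : q < 1)
    (α β : ℝ) (hα : |α| < Real.pi / 2) (hβ0 : 0 ≤ β) (hβ1 : β < 1) :
    (∑' n : ℕ, (2 * ((n : ℝ) + 2) - Real.cos α - β) *
        (((n + 2) + m - 2).choose (m - 1) : ℝ) * q ^ (n + 1) * (1 - q) ^ m / ((n : ℝ) + 2)
      ≤ Real.cos α - β)
    ↔ 2 * (1 - (1 - q) ^ m)
        - ((Real.cos α + β) / (q * ((m : ℝ) - 1))) *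
            ((1 - q) - (1 - q) ^ m - q * ((m : ℝ) - 1) * (1 - q) ^ m)
      ≤ Real.cos α - β := by
  obtain ⟨k, rfl⟩ : ∃ k, m = k + 2 := ⟨m - 2, by omega⟩
  set c := Real.cos α + β with hc
  have hq' : ‖q‖ < 1 := by rw [Real.norm_eq_abs, abs_lt]; constructor <;> linarith
  have hqne : q ≠ 0 := ne_of_gt hq0
  have h1q : (1 : ℝ) - q ≠ 0 := by linarith
  have hk1 : ((k : ℝ) + 1) ≠ 0 := by positivity
  have h1 : HasSum (fun n : ℕ ↦ ((n + (k+1)).choose (k+1) : ℝ) * q ^ n)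
      (1 / (1 - q) ^ (k + 2)) := hasSum_choose_mul_geometric_of_norm_lt_one (k+1) hq'
  have h2 : HasSum (fun n : ℕ ↦ ((n + k).choose k : ℝ) * q ^ n)
      (1 / (1 - q) ^ (k + 1)) := hasSum_choose_mul_geometric_of_norm_lt_one k hq'
  have h1' : HasSum (fun n : ℕ ↦ (((n + 1) + (k+1)).choose (k+1) : ℝ) * q ^ (n + 1))
      (1 / (1 - q) ^ (k + 2) - 1) := by
    have := (hasSum_nat_add_iff'
      (f := fun n : ℕ ↦ ((n + (k+1)).choose (k+1) : ℝ) * q ^ n) 1).mpr h1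
    simpa using this
  have h2' : HasSum (fun n : ℕ ↦ (((n + 2) + k).choose k : ℝ) * q ^ (n + 2))
      (1 / (1 - q) ^ (k + 1) - (1 + ((k : ℝ) + 1) * q)) := by
    have hck : ((1 + k).choose k : ℝ) = (k : ℝ) + 1 := by
      rw [Nat.add_comm, Nat.choose_succ_self_right]; push_cast; ring
    have := (hasSum_nat_add_iff'
      (f := fun n : ℕ ↦ ((n + k).choose k : ℝ) * q ^ n) 2).mpr h2
    simp [Finset.sum_range_succ, hck] at this
    convert this using 1
    · rfl
    · rw [one_div]
  have hcomb : HasSum (fun n : ℕ ↦ (2 * ((n : ℝ) + 2) - Real.cos α - β) *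
        (((n + 2) + (k + 2) - 2).choose ((k + 2) - 1) : ℝ) * q ^ (n + 1) * (1 - q) ^ (k + 2)
          / ((n : ℝ) + 2))
      (2 * (1 - q) ^ (k + 2) * (1 / (1 - q) ^ (k + 2) - 1)
        - c * (1 - q) ^ (k + 2) / (q * ((k : ℝ) + 1))
          * (1 / (1 - q) ^ (k + 1) - (1 + ((k : ℝ) + 1) * q))) := by
    have H := (h1'.mul_left (2 * (1 - q) ^ (k + 2))).sub
      (h2'.mul_left (c * (1 - q) ^ (k + 2) / (q * ((k : ℝ) + 1))))
    convert H using 2 with n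
    · rfl
    have hn2 : ((n : ℝ) + 2) ≠ 0 := by positivity
    have hch : ((n + k + 2).choose (k + 1) : ℝ) * ((k : ℝ) + 1)
        = ((n + k + 2).choose k : ℝ) * ((n : ℝ) + 2) := by
      have := Nat.choose_succ_right_eq (n + k + 2) k
      have h' : n + k + 2 - k = n + 2 := by omega
      rw [h'] at this
      exact_mod_cast congrArg (fun x : ℕ ↦ (x : ℝ)) this
    have hM : ((n + k + 2).choose k : ℝ)
        = ((n + k + 2).choose (k + 1) : ℝ) * ((k : ℝ) + 1) / ((n : ℝ) + 2) := by
      rw [eq_div_iff hn2]; linarith [hch]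
    have e1 : (n + 2) + (k + 2) - 2 = n + k + 2 := by omega
    have e2 : (n + 1) + (k + 1) = n + k + 2 := by omega
    have e3 : (n + 2) + k = n + k + 2 := by omega
    have e4 : k + 2 - 1 = k + 1 := by omega
    rw [e1, e2, e3, e4, hM, hc]
    field_simp
    ring
  have key : (∑' n : ℕ, (2 * ((n : ℝ) + 2) - Real.cos α - β) *
        (((n + 2) + (k + 2) - 2).choose ((k + 2) - 1) : ℝ) * q ^ (n + 1) * (1 - q) ^ (k + 2)
          / ((n : ℝ) + 2))
      = 2 * (1 - (1 - q) ^ (k + 2))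
        - (c / (q * (((k + 2 : ℕ) : ℝ) - 1))) *
            ((1 - q) - (1 - q) ^ (k + 2) - q * (((k + 2 : ℕ) : ℝ) - 1) * (1 - q) ^ (k + 2)) := by
    rw [hcomb.tsum_eq]
    have hPQ : (1 - q) ^ (k + 2) = (1 - q) ^ (k + 1) * (1 - q) := pow_succ _ _
    rw [hPQ]
    push_cast
    generalize hQ : (1 - q) ^ (k + 1) = Q
    have hQne : Q ≠ 0 := hQ ▸ pow_ne_zero _ h1q
    have eA : 2 * (Q * (1 - q)) * (1 / (Q * (1 - q)) - 1) = 2 * (1 - Q * (1 - q)) := by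
      have hP : Q * (1 - q) ≠ 0 := mul_ne_zero hQne h1q
      field_simp
    have eB : (Q * (1 - q)) * (1 / Q - (1 + ((k : ℝ) + 1) * q))
        = (1 - q) - Q * (1 - q) - q * ((k : ℝ) + 1) * (Q * (1 - q)) := by
      field_simp
      ring
    linear_combination eA - (c / (q * ((k : ℝ) + 1))) * eB
  rw [key]
end

section
/- Let |α| < π/2, m ≥ 1 an integer, and 0 ≤ q < 1. Then 2qm/(1-q) + (2 - cos α)(1 - (1-q)^m) ≤ cos α holds if and only if ∑_{n=2}^∞ (2n - cos α) C(n+m-2, m-1) q^{n-1}(1-q)^m ≤ cos α. -/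
theorem Phi_mem_TSP_alpha_iff (m : ℕ) (hm : 1 ≤ m) (q : ℝ) (hq0 : 0 ≤ q) (hq1 : q < 1)
    (α : ℝ) (hα : |α| < Real.pi / 2) :
    2 * q * m / (1 - q) + (2 - Real.cos α) * (1 - (1 - q) ^ m) ≤ Real.cos α
    ↔ ∑' n : ℕ, (2 * ((n : ℝ) + 2) - Real.cos α) *
        (((n + 2) + m - 2).choose (m - 1) : ℝ) * q ^ (n + 1) * (1 - q) ^ m
      ≤ Real.cos α := by
  obtain ⟨k, rfl⟩ : ∃ k, m = k + 1 := ⟨m - 1, by omega⟩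
  set c := Real.cos α with hc
  have hq : ‖q‖ < 1 := by rw [Real.norm_eq_abs, abs_of_nonneg hq0]; exact hq1
  have h1q : (1 : ℝ) - q ≠ 0 := by nlinarith
  have h2 := hasSum_choose_mul_geometric_of_norm_lt_one (𝕜 := ℝ) k hq
  have h1 := hasSum_choose_mul_geometric_of_norm_lt_one (𝕜 := ℝ) (k + 1) hq
  have h2' : HasSum (fun n : ℕ => (((n + 1) + k).choose k : ℝ) * q ^ (n + 1))
      (1 / (1 - q) ^ (k + 1) - 1) := by
    have := (hasSum_nat_add_iff'
      (f := fun n : ℕ => (((n + k).choose k : ℕ) : ℝ) * q ^ n) 1).2 h2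
    simpa using this
  have hB := h1.mul_left ((2 : ℝ) * (k + 1) * q)
  have hf : HasSum (fun n : ℕ => (2 * ((n : ℝ) + 2) - c) *
        ((((n + 2) + (k + 1) - 2).choose ((k + 1) - 1) : ℕ) : ℝ) * q ^ (n + 1)
          * (1 - q) ^ (k + 1))
      ((2 * (k + 1) * q * (1 / (1 - q) ^ (k + 1 + 1))
        + (2 - c) * (1 / (1 - q) ^ (k + 1) - 1)) * (1 - q) ^ (k + 1)) := by
    have hsum := (hB.add (h2'.mul_left (2 - c))).mul_right ((1 - q) ^ (k + 1))
    convert hsum using 2 with n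
    case e'_3 => rfl
    have hn : (n + 2) + (k + 1) - 2 = (n + 1) + k := by omega
    have hk : (k + 1) - 1 = k := by omega
    rw [hn, hk]
    have key : ((n : ℝ) + 1) * (((n + 1) + k).choose k : ℝ)
        = ((k : ℝ) + 1) * ((n + (k + 1)).choose (k + 1) : ℝ) := by
      have h := Nat.choose_succ_right_eq (n + k + 1) k
      have h' : (n + k + 1).choose (k + 1) * (k + 1) = (n + k + 1).choose k * (n + 1) := by
        rw [h]; congr 1; omega
      have hi1 : (n + 1) + k = n + k + 1 := by omega
      have hi2 : n + (k + 1) = n + k + 1 := by omega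
      rw [hi1, hi2]
      have hcast := congrArg (Nat.cast : ℕ → ℝ) h'
      push_cast at hcast
      linarith
    linear_combination (2 * q ^ (n + 1) * (1 - q) ^ (k + 1)) * key
  rw [hf.tsum_eq]
  have hval : (2 * ((k : ℝ) + 1) * q * (1 / (1 - q) ^ (k + 1 + 1))
      + (2 - c) * (1 / (1 - q) ^ (k + 1) - 1)) * (1 - q) ^ (k + 1)
      = 2 * q * ((k : ℝ) + 1) / (1 - q) + (2 - c) * (1 - (1 - q) ^ (k + 1)) := by
    field_simp
    ring
  rw [hval]
  push_cast
  rfl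
end

section
/- Let |α| < π/2, m ≥ 1 an integer, and 0 ≤ q < 1. Then ∑_{n=2}^∞ n(2n - cos α) C(n+m-2, m-1) q^{n-1}(1-q)^m ≤ cos α if and only if 2q²m(m+1)/(1-q)² + (6 - cos α)·qm/(1-q) + (2 - cos α)(1 - (1-q)^m) ≤ cos α. -/
open Finset

lemma choose_aux2 (n M : ℕ) :
    (n + 1) * (n + M + 1).choose M = (M + 1) * (n + M + 1).choose (M + 1) := by
  have h := Nat.choose_succ_right_eq (n + M + 1) M
  have : n + M + 1 - M = n + 1 := by omega
  rw [this] at h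
  calc (n + 1) * (n + M + 1).choose M = (n + M + 1).choose M * (n + 1) := by ring
    _ = (n + M + 1).choose (M + 1) * (M + 1) := h.symm
    _ = (M + 1) * (n + M + 1).choose (M + 1) := by ring

lemma choose_aux1 (n M : ℕ) :
    n * (n + 1) * (n + M + 1).choose M
      = (M + 1) * (M + 2) * (n + M + 1).choose (M + 2) := by
  have h1 := choose_aux2 n M
  have h2 := Nat.choose_succ_right_eq (n + M + 1) (M + 1)
  have : n + M + 1 - (M + 1) = n := by omega
  rw [this] at h2
  calc n * (n + 1) * (n + M + 1).choose M
      = n * ((n + 1) * (n + M + 1).choose M) := by ring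
    _ = n * ((M + 1) * (n + M + 1).choose (M + 1)) := by rw [h1]
    _ = (M + 1) * ((n + M + 1).choose (M + 1) * n) := by ring
    _ = (M + 1) * ((n + M + 1).choose (M + 2) * (M + 2)) := by rw [← h2]
    _ = (M + 1) * (M + 2) * (n + M + 1).choose (M + 2) := by ring

theorem Phi_mem_UCT_alpha_iff (m : ℕ) (hm : 1 ≤ m) (q : ℝ) (hq0 : 0 ≤ q) (hq1 : q < 1)
    (α : ℝ) (hα : |α| < Real.pi / 2) :
    (∑' n : ℕ, ((n : ℝ) + 2) * (2 * ((n : ℝ) + 2) - Real.cos α) *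
        (((n + 2) + m - 2).choose (m - 1) : ℝ) * q ^ (n + 1) * (1 - q) ^ m
      ≤ Real.cos α)
    ↔ 2 * q ^ 2 * m * (m + 1) / (1 - q) ^ 2 + (6 - Real.cos α) * (q * m / (1 - q))
        + (2 - Real.cos α) * (1 - (1 - q) ^ m) ≤ Real.cos α := by
  obtain ⟨M, rfl⟩ : ∃ M, m = M + 1 := ⟨m - 1, by omega⟩
  set c := Real.cos α with hc
  have hqn : ‖q‖ < 1 := by rw [Real.norm_eq_abs, abs_of_nonneg hq0]; exact hq1
  have hne : (1 : ℝ) - q ≠ 0 := by linarith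
  have base : ∀ k : ℕ, HasSum (fun n : ℕ => (((n + k).choose k : ℕ) : ℝ) * q ^ n)
      (1 / (1 - q) ^ (k + 1)) := fun k => hasSum_choose_mul_geometric_of_norm_lt_one k hqn
  -- A : sum of C(n+M+1, M+2) q^(n+1)
  have hA : HasSum (fun n : ℕ => (((n + M + 1).choose (M + 2) : ℕ) : ℝ) * q ^ (n + 1))
      (q ^ 2 / (1 - q) ^ (M + 3)) := by
    have h1 := (base (M + 2)).mul_left (q ^ 2)
    have h2 : HasSum (fun n : ℕ =>
        (fun n : ℕ => (((n + M + 1).choose (M + 2) : ℕ) : ℝ) * q ^ (n + 1)) (n + 1))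
        (q ^ 2 * (1 / (1 - q) ^ (M + 2 + 1))) := by
      refine h1.congr_fun fun n => ?_
      have : n + (M + 2) = n + 1 + M + 1 := by omega
      rw [this]; ring
    have h3 := (hasSum_nat_add_iff
      (f := fun n : ℕ => (((n + M + 1).choose (M + 2) : ℕ) : ℝ) * q ^ (n + 1)) 1).mp h2
    have h0 : (((0 + M + 1).choose (M + 2) : ℕ) : ℝ) = 0 := by
      rw [Nat.choose_eq_zero_of_lt (by omega)]; simp
    simpa [h0, div_eq_mul_inv, mul_comm] using h3
  -- B : sum of C(n+M+1, M+1) q^(n+1)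
  have hB : HasSum (fun n : ℕ => (((n + M + 1).choose (M + 1) : ℕ) : ℝ) * q ^ (n + 1))
      (q / (1 - q) ^ (M + 2)) := by
    have h1 := (base (M + 1)).mul_left q
    have h2 : HasSum (fun n : ℕ => (((n + M + 1).choose (M + 1) : ℕ) : ℝ) * q ^ (n + 1))
        (q * (1 / (1 - q) ^ (M + 1 + 1))) := by
      refine h1.congr_fun fun n => ?_
      have : n + (M + 1) = n + M + 1 := by omega
      rw [this]; ring
    simpa [div_eq_mul_inv, mul_comm] using h2
  -- D : sum of C(n+M+1, M) q^(n+1)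
  have hD : HasSum (fun n : ℕ => (((n + M + 1).choose M : ℕ) : ℝ) * q ^ (n + 1))
      (1 / (1 - q) ^ (M + 1) - 1) := by
    have hb : HasSum (fun n : ℕ => (((n + M).choose M : ℕ) : ℝ) * q ^ n)
        ((1 / (1 - q) ^ (M + 1) - 1) + ∑ i ∈ range 1,
          (((i + M).choose M : ℕ) : ℝ) * q ^ i) := by
      have : (1 / (1 - q) ^ (M + 1) - 1) + ∑ i ∈ range 1,
          (((i + M).choose M : ℕ) : ℝ) * q ^ i = 1 / (1 - q) ^ (M + 1) := by
        simp
      rw [this]; exact base M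
    have h2 := (hasSum_nat_add_iff
      (f := fun n : ℕ => (((n + M).choose M : ℕ) : ℝ) * q ^ n) 1).mpr hb
    refine h2.congr_fun fun n => ?_
    have : n + 1 + M = n + M + 1 := by omega
    rw [this]
  -- combined sum
  have hS : HasSum (fun n : ℕ =>
      (1 - q) ^ (M + 1) *
        (2 * ((M : ℝ) + 1) * ((M : ℝ) + 2) * ((((n + M + 1).choose (M + 2) : ℕ) : ℝ) * q ^ (n + 1))
          + (6 - c) * ((M : ℝ) + 1) * ((((n + M + 1).choose (M + 1) : ℕ) : ℝ) * q ^ (n + 1))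
          + (2 - c) * ((((n + M + 1).choose M : ℕ) : ℝ) * q ^ (n + 1))))
      ((1 - q) ^ (M + 1) *
        (2 * ((M : ℝ) + 1) * ((M : ℝ) + 2) * (q ^ 2 / (1 - q) ^ (M + 3))
          + (6 - c) * ((M : ℝ) + 1) * (q / (1 - q) ^ (M + 2))
          + (2 - c) * (1 / (1 - q) ^ (M + 1) - 1))) := by
    exact (((hA.mul_left _).add (hB.mul_left _)).add (hD.mul_left _)).mul_left _
  -- pointwise identification with the original series
  have hpt : ∀ n : ℕ,
      ((n : ℝ) + 2) * (2 * ((n : ℝ) + 2) - c) *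
          (((n + 2) + (M + 1) - 2).choose M : ℝ) * q ^ (n + 1) * (1 - q) ^ (M + 1)
        = (1 - q) ^ (M + 1) *
          (2 * ((M : ℝ) + 1) * ((M : ℝ) + 2) * ((((n + M + 1).choose (M + 2) : ℕ) : ℝ) * q ^ (n + 1))
            + (6 - c) * ((M : ℝ) + 1) * ((((n + M + 1).choose (M + 1) : ℕ) : ℝ) * q ^ (n + 1))
            + (2 - c) * ((((n + M + 1).choose M : ℕ) : ℝ) * q ^ (n + 1))) := by
    intro n
    have harg : (n + 2) + (M + 1) - 2 = n + M + 1 := by omega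
    rw [harg]
    have e1 : (n : ℝ) * ((n : ℝ) + 1) * (((n + M + 1).choose M : ℕ) : ℝ)
        = ((M : ℝ) + 1) * ((M : ℝ) + 2) * (((n + M + 1).choose (M + 2) : ℕ) : ℝ) := by
      exact_mod_cast congrArg (Nat.cast (R := ℝ)) (choose_aux1 n M)
    have e2 : ((n : ℝ) + 1) * (((n + M + 1).choose M : ℕ) : ℝ)
        = ((M : ℝ) + 1) * (((n + M + 1).choose (M + 1) : ℕ) : ℝ) := by
      exact_mod_cast congrArg (Nat.cast (R := ℝ)) (choose_aux2 n M)
    linear_combination (q ^ (n + 1) * (1 - q) ^ (M + 1) * 2) * e1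
      + (q ^ (n + 1) * (1 - q) ^ (M + 1) * (6 - c)) * e2
  have key : (∑' n : ℕ, ((n : ℝ) + 2) * (2 * ((n : ℝ) + 2) - c) *
        (((n + 2) + (M + 1) - 2).choose M : ℝ) * q ^ (n + 1) * (1 - q) ^ (M + 1))
      = (1 - q) ^ (M + 1) *
        (2 * ((M : ℝ) + 1) * ((M : ℝ) + 2) * (q ^ 2 / (1 - q) ^ (M + 3))
          + (6 - c) * ((M : ℝ) + 1) * (q / (1 - q) ^ (M + 2))
          + (2 - c) * (1 / (1 - q) ^ (M + 1) - 1)) := by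
    rw [tsum_congr hpt]; exact hS.tsum_eq
  have hval : (1 - q) ^ (M + 1) *
        (2 * ((M : ℝ) + 1) * ((M : ℝ) + 2) * (q ^ 2 / (1 - q) ^ (M + 3))
          + (6 - c) * ((M : ℝ) + 1) * (q / (1 - q) ^ (M + 2))
          + (2 - c) * (1 / (1 - q) ^ (M + 1) - 1))
      = 2 * q ^ 2 * ((M : ℝ) + 1) * (((M : ℝ) + 1) + 1) / (1 - q) ^ 2
        + (6 - c) * (q * ((M : ℝ) + 1) / (1 - q))
        + (2 - c) * (1 - (1 - q) ^ (M + 1)) := by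
    have h3 : (1 - q) ^ (M + 3) = (1 - q) ^ (M + 1) * (1 - q) ^ 2 := by
      rw [← pow_add]
    have h2 : (1 - q) ^ (M + 2) = (1 - q) ^ (M + 1) * (1 - q) := by
      rw [← pow_succ]
    rw [h3, h2]
    field_simp
    ring
  push_cast
  rw [key, hval]
end
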